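/- arXiv:2007.10041 — 2 statements merged into one kernel-verified Lean document; each statement's English description precedes it below -/
import Mathlib

section
/- Let Q be a convex quadrilateral with vertices a, b, c, d in counterclockwise order, and for t ∈ [0,1] let I_t be the segment from a_t = (1−t)a + tb to c_t = (1−t)d + tc. Then the angle θ(t) between segment [a,b] and segment I_t is a monotone function of t on [0,1]. Consequently, if every angle of Q lies within θ of 90°, then both sub-quadrilaterals obtained by cutting Q along any I_t also have all angles within θ of 90°. -/
open Real EuclideanGeometry

/-- Cross product (determinant) of two planar vectors. -/
def cross2 (u v : EuclideanSpace ℝ (Fin 2)) : ℝ := u 0 * v 1 - u 1 * v 0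

section Aux

variable {u v w0 w1 : EuclideanSpace ℝ (Fin 2)}

private lemma inner_eq (u v : EuclideanSpace ℝ (Fin 2)) :
    (inner ℝ u v : ℝ) = u 0 * v 0 + u 1 * v 1 := by
  simp [PiLp.inner_apply, Fin.sum_univ_two, RCLike.inner_apply, conj_trivial]
  ring

/-- In the open upper half plane relative to `u`, the angle is `π/2 - arctan(p/q)`. -/
private lemma angle_eq_arctan (u v : EuclideanSpace ℝ (Fin 2)) (hq : 0 < cross2 u v) :
    InnerProductGeometry.angle u v
      = π / 2 - Real.arctan ((inner ℝ u v : ℝ) / cross2 u v) := by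
  have hS : ‖u‖ * ‖v‖ = Real.sqrt ((inner ℝ u v : ℝ) ^ 2 + cross2 u v ^ 2) := by
    rw [EuclideanSpace.norm_eq, EuclideanSpace.norm_eq, ← Real.sqrt_mul (by positivity)]
    congr 1
    simp only [Fin.sum_univ_two, Real.norm_eq_abs, sq_abs, inner_eq, cross2]
    ring
  have hS0 : 0 < Real.sqrt ((inner ℝ u v : ℝ) ^ 2 + cross2 u v ^ 2) :=
    Real.sqrt_pos.2 (by positivity)
  have h1 : Real.sqrt (1 + ((inner ℝ u v : ℝ) / cross2 u v) ^ 2)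
      = Real.sqrt ((inner ℝ u v : ℝ) ^ 2 + cross2 u v ^ 2) / cross2 u v := by
    rw [show 1 + ((inner ℝ u v : ℝ) / cross2 u v) ^ 2
        = ((inner ℝ u v : ℝ) ^ 2 + cross2 u v ^ 2) / cross2 u v ^ 2 by
      field_simp; ring, Real.sqrt_div (by positivity), Real.sqrt_sq hq.le]
  have harc : Real.arctan ((inner ℝ u v : ℝ) / cross2 u v)
      = Real.arcsin ((inner ℝ u v : ℝ) / Real.sqrt ((inner ℝ u v : ℝ) ^ 2 + cross2 u v ^ 2)) := by
    rw [Real.arctan_eq_arcsin, h1]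
    congr 1
    field_simp
  rw [InnerProductGeometry.angle, hS, Real.arccos_eq_pi_div_two_sub_arcsin, harc]

private lemma cross2_line (u w0 w1 : EuclideanSpace ℝ (Fin 2)) (t : ℝ) :
    cross2 u ((1 - t) • w0 + t • w1) = cross2 u w0 + t * (cross2 u w1 - cross2 u w0) := by
  simp [cross2, PiLp.add_apply, PiLp.smul_apply, smul_eq_mul]; ring

private lemma inner_line (u w0 w1 : EuclideanSpace ℝ (Fin 2)) (t : ℝ) :
    (inner ℝ u ((1 - t) • w0 + t • w1) : ℝ)
      = (inner ℝ u w0 : ℝ) + t * ((inner ℝ u w1 : ℝ) - (inner ℝ u w0 : ℝ)) := by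
  rw [inner_add_right, real_inner_smul_right, real_inner_smul_right]; ring

private lemma mobius_mono (A B C D : ℝ) (h : ∀ t ∈ Set.Icc (0:ℝ) 1, 0 < C + t * D) :
    MonotoneOn (fun t => (A + t * B) / (C + t * D)) (Set.Icc (0:ℝ) 1) ∨
      AntitoneOn (fun t => (A + t * B) / (C + t * D)) (Set.Icc (0:ℝ) 1) := by
  rcases le_or_gt 0 (B * C - A * D) with hK | hK
  · left
    intro s hs t ht hst
    rw [div_le_div_iff₀ (h s hs) (h t ht)]
    nlinarith [mul_nonneg (sub_nonneg.2 hst) hK]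
  · right
    intro s hs t ht hst
    rw [div_le_div_iff₀ (h t ht) (h s hs)]
    nlinarith [mul_nonneg (sub_nonneg.2 hst) (neg_nonneg.2 hK.le)]

private lemma angle_line_mono (u w0 w1 : EuclideanSpace ℝ (Fin 2))
    (hq0 : 0 < cross2 u w0) (hq1 : 0 < cross2 u w1) :
    MonotoneOn (fun t : ℝ => InnerProductGeometry.angle u ((1 - t) • w0 + t • w1))
      (Set.Icc 0 1) ∨
    AntitoneOn (fun t : ℝ => InnerProductGeometry.angle u ((1 - t) • w0 + t • w1))
      (Set.Icc 0 1) := by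
  have hqpos : ∀ t ∈ Set.Icc (0:ℝ) 1,
      0 < cross2 u w0 + t * (cross2 u w1 - cross2 u w0) := by
    intro t ht
    nlinarith [mul_nonneg ht.1 hq1.le, mul_nonneg (sub_nonneg.2 ht.2) hq0.le]
  have hf : ∀ t ∈ Set.Icc (0:ℝ) 1,
      InnerProductGeometry.angle u ((1 - t) • w0 + t • w1)
        = π / 2 - Real.arctan
            (((inner ℝ u w0 : ℝ) + t * ((inner ℝ u w1 : ℝ) - (inner ℝ u w0 : ℝ)))
              / (cross2 u w0 + t * (cross2 u w1 - cross2 u w0))) := by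
    intro t ht
    rw [angle_eq_arctan _ _ (by rw [cross2_line]; exact hqpos t ht), inner_line, cross2_line]
  rcases mobius_mono (inner ℝ u w0 : ℝ) ((inner ℝ u w1 : ℝ) - (inner ℝ u w0 : ℝ))
      (cross2 u w0) (cross2 u w1 - cross2 u w0) hqpos with h | h
  · right
    intro s hs t ht hst
    simp only [hf s hs, hf t ht]
    have := Real.arctan_strictMono.monotone (h hs ht hst)
    linarith
  · left
    intro s hs t ht hst
    simp only [hf s hs, hf t ht]
    have := Real.arctan_strictMono.monotone (h hs ht hst)
    linarith

private lemma between_of_monoanti {f : ℝ → ℝ} {lo hi : ℝ}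
    (h : MonotoneOn f (Set.Icc 0 1) ∨ AntitoneOn f (Set.Icc 0 1))
    (h0 : f 0 ∈ Set.Icc lo hi) (h1 : f 1 ∈ Set.Icc lo hi) {t : ℝ}
    (ht : t ∈ Set.Icc (0:ℝ) 1) : f t ∈ Set.Icc lo hi := by
  have m0 : (0:ℝ) ∈ Set.Icc (0:ℝ) 1 := by norm_num
  have m1 : (1:ℝ) ∈ Set.Icc (0:ℝ) 1 := by norm_num
  rcases h with h | h
  · exact ⟨h0.1.trans (h m0 ht ht.1), (h ht m1 ht.2).trans h1.2⟩
  · exact ⟨h1.1.trans (h ht m1 ht.2), (h m0 ht ht.1).trans h0.2⟩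

private lemma flip_mem {θ x : ℝ} (h : x ∈ Set.Icc (π / 2 - θ) (π / 2 + θ)) :
    π - x ∈ Set.Icc (π / 2 - θ) (π / 2 + θ) :=
  ⟨by have := h.2; linarith, by have := h.1; linarith⟩

end Aux

/-- For a convex quadrilateral a b c d (counterclockwise), the angle between side [a,b]
and the propagation segment I_t from a_t = (1−t)a+tb to c_t = (1−t)d+tc is monotone in t.
Consequently if all four angles of the quadrilateral are within θ of 90°, then cutting
along any I_t (0 < t < 1) produces two sub-quadrilaterals all of whose angles are also
within θ of 90°. -/
theorem propagation_angle_monotone_and_nice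
    (a b c d : EuclideanSpace ℝ (Fin 2)) (θ : ℝ)
    (h1 : 0 < cross2 (b - a) (c - b)) (h2 : 0 < cross2 (c - b) (d - c))
    (h3 : 0 < cross2 (d - c) (a - d)) (h4 : 0 < cross2 (a - d) (b - a)) :
    (MonotoneOn
        (fun t : ℝ => InnerProductGeometry.angle (b - a)
          (((1 - t) • d + t • c) - ((1 - t) • a + t • b))) (Set.Icc 0 1) ∨
      AntitoneOn
        (fun t : ℝ => InnerProductGeometry.angle (b - a)
          (((1 - t) • d + t • c) - ((1 - t) • a + t • b))) (Set.Icc 0 1)) ∧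
    ((∠ d a b ∈ Set.Icc (π / 2 - θ) (π / 2 + θ) ∧
      ∠ a b c ∈ Set.Icc (π / 2 - θ) (π / 2 + θ) ∧
      ∠ b c d ∈ Set.Icc (π / 2 - θ) (π / 2 + θ) ∧
      ∠ c d a ∈ Set.Icc (π / 2 - θ) (π / 2 + θ)) →
      ∀ t ∈ Set.Ioo (0 : ℝ) 1,
        (∠ d a ((1 - t) • a + t • b) ∈ Set.Icc (π / 2 - θ) (π / 2 + θ) ∧
         ∠ a ((1 - t) • a + t • b) ((1 - t) • d + t • c) ∈ Set.Icc (π / 2 - θ) (π / 2 + θ) ∧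
         ∠ ((1 - t) • a + t • b) ((1 - t) • d + t • c) d ∈ Set.Icc (π / 2 - θ) (π / 2 + θ) ∧
         ∠ ((1 - t) • d + t • c) d a ∈ Set.Icc (π / 2 - θ) (π / 2 + θ)) ∧
        (∠ ((1 - t) • d + t • c) ((1 - t) • a + t • b) b ∈ Set.Icc (π / 2 - θ) (π / 2 + θ) ∧
         ∠ ((1 - t) • a + t • b) b c ∈ Set.Icc (π / 2 - θ) (π / 2 + θ) ∧
         ∠ b c ((1 - t) • d + t • c) ∈ Set.Icc (π / 2 - θ) (π / 2 + θ) ∧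
         ∠ c ((1 - t) • d + t • c) ((1 - t) • a + t • b) ∈ Set.Icc (π / 2 - θ) (π / 2 + θ))) := by
  -- cross-product positivity for the two reference directions
  have hq0f : 0 < cross2 (b - a) (d - a) := by
    have : cross2 (b - a) (d - a) = cross2 (a - d) (b - a) := by simp [cross2]; ring
    rw [this]; exact h4
  have hq1f : 0 < cross2 (b - a) (c - b) := h1
  have hq0g : 0 < cross2 (c - d) (d - a) := by
    have : cross2 (c - d) (d - a) = cross2 (d - c) (a - d) := by simp [cross2]; ring
    rw [this]; exact h3
  have hq1g : 0 < cross2 (c - d) (c - b) := by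
    have : cross2 (c - d) (c - b) = cross2 (c - b) (d - c) := by simp [cross2]; ring
    rw [this]; exact h2
  have keyf := angle_line_mono (b - a) (d - a) (c - b) hq0f hq1f
  have keyg := angle_line_mono (c - d) (d - a) (c - b) hq0g hq1g
  have hfun : (fun t : ℝ => InnerProductGeometry.angle (b - a)
        (((1 - t) • d + t • c) - ((1 - t) • a + t • b)))
      = fun t : ℝ => InnerProductGeometry.angle (b - a) ((1 - t) • (d - a) + t • (c - b)) := by
    funext t
    congr 1
    module
  constructor
  · rw [hfun]; exact keyf
  · rintro ⟨hda, hab, hbc, hcd⟩ t ⟨ht0, ht1⟩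
    have htIcc : t ∈ Set.Icc (0:ℝ) 1 := ⟨ht0.le, ht1.le⟩
    have ht1' : 0 < 1 - t := by linarith
    set at' := (1 - t) • a + t • b with hat
    set ct' := (1 - t) • d + t • c with hct
    set v := (1 - t) • (d - a) + t • (c - b) with hv
    -- difference identities
    have e1 : at' - a = t • (b - a) := by rw [hat]; module
    have e2 : a - at' = t • (a - b) := by rw [hat]; module
    have e3 : b - at' = (1 - t) • (b - a) := by rw [hat]; module
    have e4 : at' - b = (1 - t) • (a - b) := by rw [hat]; module
    have e5 : ct' - c = (1 - t) • (d - c) := by rw [hct]; module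
    have e6 : c - ct' = (1 - t) • (c - d) := by rw [hct]; module
    have e7 : ct' - d = t • (c - d) := by rw [hct]; module
    have e7' : d - ct' = t • (d - c) := by rw [hct]; module
    have e8 : ct' - at' = v := by rw [hat, hct, hv]; module
    have e9 : at' - ct' = -v := by rw [hat, hct, hv]; module
    -- f bounds
    have f0 : InnerProductGeometry.angle (b - a) ((1 - (0:ℝ)) • (d - a) + (0:ℝ) • (c - b))
        = ∠ d a b := by
      norm_num
      rw [InnerProductGeometry.angle_comm]
      simp [EuclideanGeometry.angle, vsub_eq_sub]
    have f1 : InnerProductGeometry.angle (b - a) ((1 - (1:ℝ)) • (d - a) + (1:ℝ) • (c - b))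
        = π - ∠ a b c := by
      norm_num
      rw [show b - a = -(a - b) by module, InnerProductGeometry.angle_neg_left]
      simp [EuclideanGeometry.angle, vsub_eq_sub]
    have hfmem : InnerProductGeometry.angle (b - a) v ∈ Set.Icc (π / 2 - θ) (π / 2 + θ) := by
      have := between_of_monoanti keyf (by rw [f0]; exact hda)
        (by rw [f1]; exact flip_mem hab) htIcc
      rwa [hv]
    -- g bounds
    have g0 : InnerProductGeometry.angle (c - d) ((1 - (0:ℝ)) • (d - a) + (0:ℝ) • (c - b))
        = π - ∠ c d a := by
      norm_num
      rw [show d - a = -(a - d) by module, InnerProductGeometry.angle_neg_right]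
      simp [EuclideanGeometry.angle, vsub_eq_sub]
    have g1 : InnerProductGeometry.angle (c - d) ((1 - (1:ℝ)) • (d - a) + (1:ℝ) • (c - b))
        = ∠ b c d := by
      norm_num
      rw [show c - d = -(d - c) by module, show c - b = -(b - c) by module,
        InnerProductGeometry.angle_neg_neg, InnerProductGeometry.angle_comm]
      simp [EuclideanGeometry.angle, vsub_eq_sub]
    have hgmem : InnerProductGeometry.angle (c - d) v ∈ Set.Icc (π / 2 - θ) (π / 2 + θ) := by
      have := between_of_monoanti keyg (by rw [g0]; exact flip_mem hcd)
        (by rw [g1]; exact hbc) htIcc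
      rwa [hv]
    refine ⟨⟨?_, ?_, ?_, ?_⟩, ?_, ?_, ?_, ?_⟩
    · -- ∠ d a at' = ∠ d a b
      have : ∠ d a at' = ∠ d a b := by
        simp only [EuclideanGeometry.angle, vsub_eq_sub, e1]
        rw [InnerProductGeometry.angle_smul_right_of_pos _ _ ht0]
      rw [this]; exact hda
    · -- ∠ a at' ct' = π - angle (b-a) v
      have : ∠ a at' ct' = π - InnerProductGeometry.angle (b - a) v := by
        simp only [EuclideanGeometry.angle, vsub_eq_sub, e2, e8]
        rw [InnerProductGeometry.angle_smul_left_of_pos _ _ ht0,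
          show a - b = -(b - a) by module, InnerProductGeometry.angle_neg_left]
      rw [this]; exact flip_mem hfmem
    · -- ∠ at' ct' d = angle (c-d) v
      have : ∠ at' ct' d = InnerProductGeometry.angle (c - d) v := by
        simp only [EuclideanGeometry.angle, vsub_eq_sub, e9, e7']
        rw [InnerProductGeometry.angle_smul_right_of_pos _ _ ht0,
          show d - c = -(c - d) by module, InnerProductGeometry.angle_neg_neg,
          InnerProductGeometry.angle_comm]
      rw [this]; exact hgmem
    · -- ∠ ct' d a = ∠ c d a
      have : ∠ ct' d a = ∠ c d a := by
        simp only [EuclideanGeometry.angle, vsub_eq_sub, e7]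
        rw [InnerProductGeometry.angle_smul_left_of_pos _ _ ht0]
      rw [this]; exact hcd
    · -- ∠ ct' at' b = angle (b-a) v
      have : ∠ ct' at' b = InnerProductGeometry.angle (b - a) v := by
        simp only [EuclideanGeometry.angle, vsub_eq_sub, e8, e3]
        rw [InnerProductGeometry.angle_smul_right_of_pos _ _ ht1',
          InnerProductGeometry.angle_comm]
      rw [this]; exact hfmem
    · -- ∠ at' b c = ∠ a b c
      have : ∠ at' b c = ∠ a b c := by
        simp only [EuclideanGeometry.angle, vsub_eq_sub, e4]
        rw [InnerProductGeometry.angle_smul_left_of_pos _ _ ht1']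
      rw [this]; exact hab
    · -- ∠ b c ct' = ∠ b c d
      have : ∠ b c ct' = ∠ b c d := by
        simp only [EuclideanGeometry.angle, vsub_eq_sub, e5]
        rw [InnerProductGeometry.angle_smul_right_of_pos _ _ ht1']
      rw [this]; exact hbc
    · -- ∠ c ct' at' = π - angle (c-d) v
      have : ∠ c ct' at' = π - InnerProductGeometry.angle (c - d) v := by
        simp only [EuclideanGeometry.angle, vsub_eq_sub, e6, e9]
        rw [InnerProductGeometry.angle_smul_left_of_pos _ _ ht1',
          InnerProductGeometry.angle_neg_right]
      rw [this]; exact flip_mem hgmem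
end

section
/- Let Q be a tube of length L = ℓ(Q) that is split by its center path into two parallel sub-tubes Q_1 and Q_2. Then ℓ(Q) ≤ ℓ(Q_1), and the minimal-length of Q_1 satisfies ℓ(Q) ≤ 4·ℓ̃(Q_1). -/
open scoped BigOperators

/-- A tube Q with pieces whose two base lengths are a_j, b_j has length
ℓ(Q) = min(∑a, ∑b).  Splitting Q by its center path, the sub-tube Q₁ (between the
a-boundary and the center path) has bases a_j and (a_j+b_j)/2, so its length is
min(∑a, ∑(a+b)/2) and its minimal-length is ∑ min(a_j,(a_j+b_j)/2).  Then
ℓ(Q) ≤ ℓ(Q₁) and ℓ(Q) ≤ 4·ℓ̃(Q₁). -/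
theorem split_tube_lengths (p : ℕ) (hp : 0 < p) (a b : Fin p → ℝ)
    (ha : ∀ j, 0 ≤ a j) (hb : ∀ j, 0 ≤ b j) :
    min (∑ j, a j) (∑ j, b j) ≤ min (∑ j, a j) (∑ j, (a j + b j) / 2) ∧
    min (∑ j, a j) (∑ j, b j) ≤ 4 * ∑ j, min (a j) ((a j + b j) / 2) := by
  have hsum : (∑ j, (a j + b j) / 2) = ((∑ j, a j) + ∑ j, b j) / 2 := by
    rw [← Finset.sum_div, Finset.sum_add_distrib]
  constructor
  · refine le_min (min_le_left _ _) ?_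
    rw [hsum]
    have h1 := min_le_left (∑ j, a j) (∑ j, b j)
    have h2 := min_le_right (∑ j, a j) (∑ j, b j)
    linarith
  · have key : (∑ j, a j) / 2 ≤ ∑ j, min (a j) ((a j + b j) / 2) := by
      rw [Finset.sum_div]
      refine Finset.sum_le_sum fun j _ => ?_
      have := ha j; have := hb j
      rcases le_total (a j) ((a j + b j) / 2) with h | h <;> simp [min_eq_left, min_eq_right, h] <;> linarith
    have hA : 0 ≤ ∑ j, a j := Finset.sum_nonneg fun j _ => ha j
    have := min_le_left (∑ j, a j) (∑ j, b j)
    linarith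
end
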